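/- arXiv:1103.3881 — 2 statements merged into one kernel-verified Lean document; each statement's English description precedes it below -/
import Mathlib

section
/- The Levi-Civita transformation q = 2v², p = u/v̄ (for v ≠ 0) is symplectic up to a factor 4: the pullback of the real part of dq ∧ dp̄ equals 4 times the real part of dv ∧ dū. -/
open Complex

/-- The Levi-Civita map `(v,u) ↦ (q,p) = (2v², u/v̄)`. -/
noncomputable def leviCivita : ℂ × ℂ → ℂ × ℂ :=
  fun w => (2 * w.1 ^ 2, w.2 / (starRingEnd ℂ) w.1)

/-- The standard symplectic form `Re(dq ∧ dp̄) = dq₁∧dp₁ + dq₂∧dp₂` on `ℂ²`,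
evaluated on a pair of tangent vectors `(q̂,p̂)`, `(q̂',p̂')`. -/
noncomputable def omegaStd : ℂ × ℂ → ℂ × ℂ → ℝ :=
  fun a b => (a.1 * (starRingEnd ℂ) b.2 - b.1 * (starRingEnd ℂ) a.2).re

set_option linter.unnecessarySeqFocus false in
lemma leviCivita_fderiv_apply (v u : ℂ) (hv : v ≠ 0) (w : ℂ × ℂ) :
    fderiv ℝ leviCivita (v, u) w
      = (4 * v * w.1,
         w.2 / (starRingEnd ℂ) v - u * (starRingEnd ℂ) w.1 / (starRingEnd ℂ) v ^ 2) := by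
  have hcv : (starRingEnd ℂ) v ≠ 0 := by simpa using hv
  have hfst : HasFDerivAt (Prod.fst : ℂ × ℂ → ℂ) (ContinuousLinearMap.fst ℝ ℂ ℂ) (v, u) :=
    hasFDerivAt_fst
  have hsnd : HasFDerivAt (Prod.snd : ℂ × ℂ → ℂ) (ContinuousLinearMap.snd ℝ ℂ ℂ) (v, u) :=
    hasFDerivAt_snd
  have hconj : HasFDerivAt (fun w : ℂ × ℂ => (starRingEnd ℂ) w.1)
      (Complex.conjCLE.toContinuousLinearMap.comp (ContinuousLinearMap.fst ℝ ℂ ℂ)) (v, u) :=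
    (Complex.conjCLE.toContinuousLinearMap.hasFDerivAt).comp _ hfst
  have h1 : HasFDerivAt (fun w : ℂ × ℂ => 2 * w.1 ^ 2)
      ((4 * v) • ContinuousLinearMap.fst ℝ ℂ ℂ) (v, u) := by
    have h := (hfst.mul hfst).const_mul 2
    convert (by simpa only [pow_two, Pi.mul_apply] using h :
        HasFDerivAt (fun w : ℂ × ℂ => 2 * w.1 ^ 2) _ (v, u)) using 1
    all_goals (ext x <;> simp <;> ring)
  have hinvc : HasFDerivAt (fun z : ℂ => z⁻¹)
      (((1 : ℂ →L[ℂ] ℂ).smulRight (-((starRingEnd ℂ v) ^ 2)⁻¹)).restrictScalars ℝ)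
      ((starRingEnd ℂ) v) := (hasFDerivAt_inv hcv).restrictScalars ℝ
  have hinv := hinvc.comp (v, u) hconj
  have h2 := hsnd.mul hinv
  have h := (h1.prodMk h2).fderiv
  have hf : leviCivita
      = fun w : ℂ × ℂ => (2 * w.1 ^ 2, w.2 * ((starRingEnd ℂ) w.1)⁻¹) := by
    funext w; simp [leviCivita, div_eq_mul_inv]
  simp only [Function.comp_def, Pi.mul_apply] at h
  rw [hf, h]
  simp [ContinuousLinearMap.smul_apply, map_mul]
  field_simp
  ring

/-- The Levi-Civita transformation is symplectic up to a factor 4: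
the pullback of `Re(dq ∧ dp̄)` equals `4 Re(dv ∧ dū)`. -/
theorem leviCivita_symplectic_up_to_factor_four (v u : ℂ) (hv : v ≠ 0)
    (w₁ w₂ : ℂ × ℂ) :
    omegaStd (fderiv ℝ leviCivita (v, u) w₁) (fderiv ℝ leviCivita (v, u) w₂)
      = 4 * omegaStd w₁ w₂ := by
  rw [leviCivita_fderiv_apply v u hv w₁, leviCivita_fderiv_apply v u hv w₂]
  have hcv : (starRingEnd ℂ) v ≠ 0 := by simpa using hv
  simp only [omegaStd, map_sub, map_mul, map_div₀, map_pow, map_ofNat,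
    Complex.conj_conj, RingHom.map_mul]
  have key : 4 * v * w₁.1 * ((starRingEnd ℂ) w₂.2 / v - (starRingEnd ℂ) u * w₂.1 / v ^ 2)
      - 4 * v * w₂.1 * ((starRingEnd ℂ) w₁.2 / v - (starRingEnd ℂ) u * w₁.1 / v ^ 2)
      = 4 * (w₁.1 * (starRingEnd ℂ) w₂.2 - w₂.1 * (starRingEnd ℂ) w₁.2) := by
    field_simp
    ring
  rw [key]
  simp
end

section
/- Let ε ∈ (0,1/4) and let v, v̂ ∈ ℂ with |v|² < ε. Then |D²(|v|²/|2v²-1|)[v̂,v̂]| ≤ C'(ε + ε^{1/2})|v̂|² + 2(1+4ε)|v̂|² for some universal constant C' (all terms of the Hessian of |v|²/|2v²-1| except the term 2|v̂|²/|2v²-1| are bounded by a universal constant times ε^{1/2}|v̂|², using that each such term contains at least one extra factor of v). -/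
open Complex Metric

local notation "⟪" x ", " y "⟫" => @inner ℝ ℂ _ x y


lemma aux_est {C1 C2 ε s A B I P n h : ℝ}
    (hC1 : 0 ≤ C1) (hC2 : 0 ≤ C2) (hε : 0 < ε) (hs : 0 ≤ s)
    (hh : 0 ≤ h) (hn : 0 ≤ n) (hnε : n ^ 2 < ε)
    (hA : |A| ≤ C2 * h ^ 2) (hB : |B| ≤ C1 * h) (hI : |I| ≤ s * h)
    (hP0 : 0 ≤ P) (hP : P ≤ 1 + 4 * ε) :
    |n ^ 2 * A + B * (2 * I) + (P * (2 * h ^ 2) + 2 * I * B)|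
      ≤ (4 * C1 + C2 + 1) * (ε + s) * h ^ 2 + 2 * (1 + 4 * ε) * h ^ 2 := by
  have e1 : |n ^ 2 * A| ≤ ε * (C2 * h ^ 2) := by
    rw [abs_mul, _root_.abs_of_nonneg (pow_nonneg hn 2)]
    exact mul_le_mul (le_of_lt hnε) hA (abs_nonneg _) hε.le
  have e2 : |B * (2 * I)| ≤ C1 * h * (2 * (s * h)) := by
    rw [abs_mul, abs_mul, _root_.abs_two]
    exact mul_le_mul hB (mul_le_mul_of_nonneg_left hI (by norm_num)) (by positivity)
      (by positivity)
  have e3 : |P * (2 * h ^ 2)| ≤ (1 + 4 * ε) * (2 * h ^ 2) := by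
    rw [abs_mul, _root_.abs_of_nonneg hP0, _root_.abs_of_nonneg (by positivity : (0:ℝ) ≤ 2 * h ^ 2)]
    exact mul_le_mul_of_nonneg_right hP (by positivity)
  have e4 : |2 * I * B| ≤ 2 * (s * h) * (C1 * h) := by
    rw [abs_mul, abs_mul, _root_.abs_two]
    exact mul_le_mul (mul_le_mul_of_nonneg_left hI (by norm_num)) hB (abs_nonneg _)
      (by positivity)
  have habs : |n ^ 2 * A + B * (2 * I) + (P * (2 * h ^ 2) + 2 * I * B)|
      ≤ |n ^ 2 * A| + |B * (2 * I)| + (|P * (2 * h ^ 2)| + |2 * I * B|) :=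
    le_trans (abs_add_le _ _) (add_le_add (abs_add_le _ _) (abs_add_le _ _))
  nlinarith [mul_nonneg (mul_nonneg hC1 hε.le) (sq_nonneg h),
    mul_nonneg (mul_nonneg hC2 hs) (sq_nonneg h),
    mul_nonneg hε.le (sq_nonneg h), mul_nonneg hs (sq_nonneg h)]

set_option maxHeartbeats 1000000 in
theorem hessian_error_terms_bound :
    ∃ C' : ℝ, 0 < C' ∧ ∀ (ε : ℝ) (v vh : ℂ), ε ∈ Set.Ioo (0 : ℝ) (1 / 4) →
      ‖v‖ ^ 2 < ε →
      |fderiv ℝ (fderiv ℝ (fun w : ℂ => ‖w‖ ^ 2 / ‖2 * w ^ 2 - 1‖)) v vh vh|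
        ≤ C' * (ε + Real.sqrt ε) * ‖vh‖ ^ 2 + 2 * (1 + 4 * ε) * ‖vh‖ ^ 2 := by
  classical
  set U : Set ℂ := {w | 2 * w ^ 2 - 1 ≠ 0} with hUdef
  have hU : IsOpen U := by
    have : U = (fun w : ℂ => 2 * w ^ 2 - 1) ⁻¹' {0}ᶜ := rfl
    rw [this]
    exact (isOpen_compl_singleton).preimage (by fun_prop)
  set φ : ℂ → ℝ := fun w => ‖2 * w ^ 2 - 1‖⁻¹ with hφdef
  set f : ℂ → ℝ := fun w => ‖w‖ ^ 2 * φ w with hfdef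
  have hp : ContDiff ℝ 2 (fun w : ℂ => 2 * w ^ 2 - 1) := by fun_prop
  have hφat : ∀ w ∈ U, ContDiffAt ℝ 2 φ w := by
    intro w hw
    exact ((hp.contDiffAt.norm ℝ hw).inv (norm_ne_zero_iff.2 hw))
  have hφon : ContDiffOn ℝ 2 φ U := fun w hw => (hφat w hw).contDiffWithinAt
  have hfon : ContDiffOn ℝ 2 f U :=
    ((contDiff_norm_sq ℝ (E := ℂ)).contDiffOn).mul hφon
  have hDφon : ContDiffOn ℝ 1 (fderiv ℝ φ) U :=
    hφon.fderiv_of_isOpen hU (by norm_num)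
  have hDfon : ContDiffOn ℝ 1 (fderiv ℝ f) U :=
    hfon.fderiv_of_isOpen hU (by norm_num)
  have hK : closedBall (0 : ℂ) (1 / 2) ⊆ U := by
    intro w hw
    simp only [mem_closedBall, dist_zero_right] at hw
    intro h0
    have h1 : ‖2 * w ^ 2‖ = 2 * ‖w‖ ^ 2 := by
      rw [norm_mul, norm_pow]; norm_num
    have h2 : (2 : ℂ) * w ^ 2 = 1 := by
      have := sub_eq_zero.mp h0; linear_combination this
    rw [h2] at h1
    simp only [norm_one] at h1
    nlinarith [norm_nonneg w]
  obtain ⟨C₁, hC₁⟩ := (isCompact_closedBall (0 : ℂ) (1 / 2)).exists_bound_of_continuousOn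
    ((hφon.continuousOn_fderiv_of_isOpen hU (by norm_num)).mono hK)
  obtain ⟨C₂, hC₂⟩ := (isCompact_closedBall (0 : ℂ) (1 / 2)).exists_bound_of_continuousOn
    ((hDφon.continuousOn_fderiv_of_isOpen hU (by norm_num)).mono hK)
  refine ⟨4 * max C₁ 0 + max C₂ 0 + 1, by positivity, ?_⟩
  intro ε v vh hε hv
  obtain ⟨hε0, hε14⟩ := hε
  have hvn : ‖v‖ < 1 / 2 := by nlinarith [norm_nonneg v]
  have hvK : v ∈ closedBall (0 : ℂ) (1 / 2) := by
    simp only [mem_closedBall, dist_zero_right]; linarith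
  have hvU : v ∈ U := hK hvK
  have hUnhds : U ∈ nhds v := hU.mem_nhds hvU
  -- rewrite the target function as f
  have hfe : (fun w : ℂ => ‖w‖ ^ 2 / ‖2 * w ^ 2 - 1‖) = f := by
    funext w; rw [hfdef]; exact div_eq_mul_inv _ _
  rw [hfe]
  -- differentiability facts at v
  have hφdiff : ∀ w ∈ U, DifferentiableAt ℝ φ w := fun w hw =>
    (hφat w hw).differentiableAt (by norm_num)
  have hgdiff : ∀ w : ℂ, DifferentiableAt ℝ (fun x : ℂ => ‖x‖ ^ 2) w := fun w =>
    ((contDiff_norm_sq ℝ (E := ℂ) (n := 1)).differentiable (by norm_num)) w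
  have hDφdiff : DifferentiableAt ℝ (fderiv ℝ φ) v :=
    (hDφon.contDiffAt hUnhds).differentiableAt (by norm_num)
  have hDfdiff : DifferentiableAt ℝ (fderiv ℝ f) v :=
    (hDfon.contDiffAt hUnhds).differentiableAt (by norm_num)
  -- evaluation map
  set e : (ℂ →L[ℝ] ℝ) →L[ℝ] ℝ := ContinuousLinearMap.apply ℝ ℝ vh with hedef
  -- step 1: second derivative via directional evaluation
  have hstep1 : fderiv ℝ (fderiv ℝ f) v vh vh
      = fderiv ℝ (fun w => fderiv ℝ f w vh) v vh := by
    have h := (e.hasFDerivAt.comp v hDfdiff.hasFDerivAt).fderiv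
    have : fderiv ℝ (fun w => e (fderiv ℝ f w)) v
        = e.comp (fderiv ℝ (fderiv ℝ f) v) := h
    simp only [hedef, ContinuousLinearMap.apply_apply] at this
    rw [this]
    simp [hedef]
  rw [hstep1]
  -- step 2: on U, fderiv f w vh has an explicit form
  have hev : (fun w => fderiv ℝ f w vh)
      =ᶠ[nhds v] (fun w => ‖w‖ ^ 2 * (fderiv ℝ φ w vh) + φ w * (2 * ⟪w, vh⟫)) := by
    filter_upwards [hUnhds] with w hw
    have hmul := fderiv_fun_mul (𝕜 := ℝ) (hgdiff w) (hφdiff w hw)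
    have hg' : fderiv ℝ (fun x : ℂ => ‖x‖ ^ 2) w = 2 • (innerSL ℝ w) :=
      (hasStrictFDerivAt_norm_sq w).hasFDerivAt.fderiv
    calc fderiv ℝ f w vh
        = (‖w‖ ^ 2 • fderiv ℝ φ w + φ w • fderiv ℝ (fun x : ℂ => ‖x‖ ^ 2) w) vh := by
          rw [hfdef, hmul]
      _ = ‖w‖ ^ 2 * (fderiv ℝ φ w vh) + φ w * (2 * ⟪w, vh⟫) := by
          rw [hg']
          simp only [ContinuousLinearMap.add_apply, ContinuousLinearMap.smul_apply,
            ContinuousLinearMap.coe_smul', Pi.smul_apply, innerSL_apply_apply, smul_eq_mul]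
          ring
  have hfd_eq : fderiv ℝ (fun w => fderiv ℝ f w vh) v
      = fderiv ℝ (fun w => ‖w‖ ^ 2 * (fderiv ℝ φ w vh) + φ w * (2 * ⟪w, vh⟫)) v :=
    hev.fderiv_eq
  rw [hfd_eq]
  -- step 3: compute the derivative of the explicit form
  set D2 : ℂ →L[ℝ] ℂ →L[ℝ] ℝ := fderiv ℝ (fderiv ℝ φ) v with hD2def
  have hq : HasFDerivAt (fun w => fderiv ℝ φ w vh) (e.comp D2) v := by
    have h := e.hasFDerivAt.comp v hDφdiff.hasFDerivAt
    simpa [hedef, Function.comp_def, ContinuousLinearMap.apply_apply] using h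
  have hg2 : HasFDerivAt (fun w : ℂ => ‖w‖ ^ 2) (2 • innerSL ℝ v) v :=
    (hasStrictFDerivAt_norm_sq v).hasFDerivAt
  have hr : HasFDerivAt (fun w : ℂ => 2 * ⟪w, vh⟫)
      ((2 : ℝ) • ((fderivInnerCLM ℝ (v, vh)).comp
        ((ContinuousLinearMap.id ℝ ℂ).prod 0))) v := by
    exact ((hasFDerivAt_id v).inner ℝ (hasFDerivAt_const vh v)).const_mul 2
  have hφv : HasFDerivAt φ (fderiv ℝ φ v) v := (hφdiff v hvU).hasFDerivAt
  have htot := ((hg2.fun_mul hq).fun_add (hφv.fun_mul hr)).fderiv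
  rw [htot]
  -- now evaluate at vh
  have hval : ((‖v‖ ^ 2 • e.comp D2 + (fderiv ℝ φ v vh) • (2 • innerSL ℝ v))
      + (φ v • ((2 : ℝ) • ((fderivInnerCLM ℝ (v, vh)).comp
          ((ContinuousLinearMap.id ℝ ℂ).prod 0)))
        + (2 * ⟪v, vh⟫) • fderiv ℝ φ v)) vh
      = ‖v‖ ^ 2 * (D2 vh vh) + (fderiv ℝ φ v vh) * (2 * ⟪v, vh⟫)
        + (φ v * (2 * ‖vh‖ ^ 2) + (2 * ⟪v, vh⟫) * (fderiv ℝ φ v vh)) := by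
    simp only [ContinuousLinearMap.add_apply, ContinuousLinearMap.smul_apply,
      ContinuousLinearMap.coe_smul', Pi.smul_apply, ContinuousLinearMap.coe_comp',
      Function.comp_apply, hedef, ContinuousLinearMap.apply_apply, innerSL_apply_apply,
      ContinuousLinearMap.prod_apply, ContinuousLinearMap.coe_id', id_eq,
      ContinuousLinearMap.zero_apply, fderivInnerCLM_apply, real_inner_self_eq_norm_sq,
      inner_zero_right, smul_eq_mul]
    ring
  rw [hval]
  -- estimates
  have hsε : ‖v‖ ≤ Real.sqrt ε := le_of_lt (Real.lt_sqrt_of_sq_lt hv)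
  have hsε0 : 0 ≤ Real.sqrt ε := Real.sqrt_nonneg ε
  have hinner : |⟪v, vh⟫| ≤ Real.sqrt ε * ‖vh‖ :=
    le_trans (abs_real_inner_le_norm v vh)
      (mul_le_mul_of_nonneg_right hsε (norm_nonneg vh))
  have hDφb : ‖fderiv ℝ φ v‖ ≤ max C₁ 0 := le_trans (hC₁ v hvK) (le_max_left _ _)
  have hD2b : ‖D2‖ ≤ max C₂ 0 := le_trans (hC₂ v hvK) (le_max_left _ _)
  have hDφvh : |fderiv ℝ φ v vh| ≤ max C₁ 0 * ‖vh‖ := by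
    refine le_trans ((fderiv ℝ φ v).le_opNorm vh) ?_
    exact mul_le_mul_of_nonneg_right hDφb (norm_nonneg vh)
  have hD2vh : |D2 vh vh| ≤ max C₂ 0 * ‖vh‖ ^ 2 := by
    calc |D2 vh vh| ≤ ‖D2 vh‖ * ‖vh‖ := (D2 vh).le_opNorm vh
      _ ≤ (‖D2‖ * ‖vh‖) * ‖vh‖ :=
          mul_le_mul_of_nonneg_right (D2.le_opNorm vh) (norm_nonneg vh)
      _ ≤ (max C₂ 0 * ‖vh‖) * ‖vh‖ :=
          mul_le_mul_of_nonneg_right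
            (mul_le_mul_of_nonneg_right hD2b (norm_nonneg vh)) (norm_nonneg vh)
      _ = max C₂ 0 * ‖vh‖ ^ 2 := by ring
  have hφvb : φ v ≤ 1 + 4 * ε := by
    have hnb : 1 - 2 * ε ≤ ‖2 * v ^ 2 - 1‖ := by
      have h1 : ‖(1 : ℂ)‖ - ‖2 * v ^ 2‖ ≤ ‖(1 : ℂ) - 2 * v ^ 2‖ := norm_sub_norm_le _ _
      have h2 : ‖(1 : ℂ) - 2 * v ^ 2‖ = ‖2 * v ^ 2 - 1‖ := norm_sub_rev _ _
      have h3 : ‖(2 : ℂ) * v ^ 2‖ = 2 * ‖v‖ ^ 2 := by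
        rw [norm_mul, norm_pow]; norm_num
      rw [h2, h3] at h1
      rw [norm_one] at h1
      linarith
    have hpos : (0 : ℝ) < 1 - 2 * ε := by linarith
    have : φ v ≤ (1 - 2 * ε)⁻¹ := by
      rw [hφdef]
      exact inv_anti₀ hpos hnb
    refine le_trans this ?_
    rw [inv_le_iff_one_le_mul₀ hpos]
    nlinarith
  have hφv0 : 0 ≤ φ v := by rw [hφdef]; positivity
  have hC1' : (0:ℝ) ≤ max C₁ 0 := le_max_right _ _
  have hC2' : (0:ℝ) ≤ max C₂ 0 := le_max_right _ _
  exact aux_est hC1' hC2' hε0 hsε0 (norm_nonneg vh) (norm_nonneg v) hv hD2vh hDφvh hinner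
    hφv0 hφvb
end
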